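/- Let W be an H-isonormal process on a probability space (Ω,μ), let G be a topological group, and let π : G → B(H) be a strongly continuous orthogonal representation, i.e. each π_s is a linear isometric bijection of H, π_{st} = π_s ∘ π_t, π_e = id, and s ↦ π_s(h) is continuous for every h ∈ H. Then for every h ∈ H and every g ∈ L¹(Ω;ℂ), the map G → ℂ, s ↦ ∫_Ω e^{i W(π_s(h))} g dμ, is continuous. (This is the weak* continuity of s ↦ Γ^∞(π_s) evaluated at the exponentials e^{iW(h)}.) -/

import Mathlib

open MeasureTheory ProbabilityTheory
open scoped ENNReal NNReal RealInnerProductSpace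

lemma norm_expI_sub_expI_le (x y : ℝ) :
    ‖Complex.exp (Complex.I * x) - Complex.exp (Complex.I * y)‖ ≤ 2 * |x - y| := by
  have hx : Complex.exp (Complex.I * x) = (Real.cos x : ℂ) + (Real.sin x : ℂ) * Complex.I := by
    rw [mul_comm, Complex.exp_mul_I]; push_cast; ring
  have hy : Complex.exp (Complex.I * y) = (Real.cos y : ℂ) + (Real.sin y : ℂ) * Complex.I := by
    rw [mul_comm, Complex.exp_mul_I]; push_cast; ring
  have hcos : |Real.cos x - Real.cos y| ≤ |x - y| := by
    rw [Real.cos_sub_cos]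
    rw [abs_mul, abs_mul]
    simp only [abs_neg, abs_two]
    have h1 : |Real.sin ((x + y) / 2)| ≤ 1 := Real.abs_sin_le_one _
    have h2 : |Real.sin ((x - y) / 2)| ≤ |(x - y) / 2| := Real.abs_sin_le_abs
    have h3 : |(x - y) / 2| = |x - y| / 2 := by rw [abs_div]; simp
    nlinarith [abs_nonneg (Real.sin ((x - y) / 2)), abs_nonneg (Real.sin ((x + y) / 2)),
      abs_nonneg (x - y)]
  have hsin : |Real.sin x - Real.sin y| ≤ |x - y| := by
    rw [Real.sin_sub_sin]
    rw [abs_mul, abs_mul]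
    simp only [abs_neg, abs_two]
    have h1 : |Real.cos ((x + y) / 2)| ≤ 1 := Real.abs_cos_le_one _
    have h2 : |Real.sin ((x - y) / 2)| ≤ |(x - y) / 2| := Real.abs_sin_le_abs
    have h3 : |(x - y) / 2| = |x - y| / 2 := by rw [abs_div]; simp
    nlinarith [abs_nonneg (Real.sin ((x - y) / 2)), abs_nonneg (Real.cos ((x + y) / 2)),
      abs_nonneg (x - y)]
  calc ‖Complex.exp (Complex.I * x) - Complex.exp (Complex.I * y)‖
      = ‖((Real.cos x - Real.cos y : ℝ) : ℂ) + ((Real.sin x - Real.sin y : ℝ) : ℂ) * Complex.I‖ := by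
        rw [hx, hy]; congr 1; push_cast; ring
    _ ≤ ‖((Real.cos x - Real.cos y : ℝ) : ℂ)‖ + ‖((Real.sin x - Real.sin y : ℝ) : ℂ) * Complex.I‖ :=
        norm_add_le _ _
    _ ≤ |x - y| + |x - y| := by
        rw [norm_mul, Complex.norm_I, mul_one, Complex.norm_real, Complex.norm_real]
        exact add_le_add hcos hsin
    _ = 2 * |x - y| := by ring

lemma norm_expI (x : ℝ) : ‖Complex.exp (Complex.I * x)‖ = 1 := by
  rw [Complex.norm_exp]
  simp

lemma expInt_continuous {Ω : Type*} [MeasurableSpace Ω] {μ : Measure Ω} [IsProbabilityMeasure μ]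
    (g : Ω → ℂ) (hg : Integrable g μ) :
    Continuous fun X : Lp ℝ 2 μ =>
      ∫ ω, Complex.exp (Complex.I * ((X : Ω → ℝ) ω : ℂ)) * g ω ∂μ := by
  have hInt : ∀ X : Lp ℝ 2 μ,
      Integrable (fun ω => Complex.exp (Complex.I * ((X : Ω → ℝ) ω : ℂ)) * g ω) μ := by
    intro X
    refine Integrable.bdd_mul (c := 1) hg ?_ (Filter.Eventually.of_forall fun ω => le_of_eq (norm_expI _))
    exact (Complex.continuous_exp.comp
      ((continuous_const.mul (Complex.continuous_ofReal)))).comp_aestronglyMeasurable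
      (Lp.aestronglyMeasurable X)
  rw [Metric.continuous_iff]
  intro Y ε hε
  set I₁ : ℝ := ∫ ω, ‖g ω‖ ∂μ with hI₁
  have hI₁nonneg : 0 ≤ I₁ := integral_nonneg fun ω => norm_nonneg _
  set ε₁ : ℝ := ε / (4 * (I₁ + 1)) with hε₁def
  have hε₁pos : 0 < ε₁ := by positivity
  -- absolute continuity of ∫ ‖g‖
  have hgfin : (∫⁻ ω, (‖g ω‖₊ : ℝ≥0∞) ∂μ) ≠ ∞ := hg.2.ne
  obtain ⟨δ₂, hδ₂pos, hδ₂⟩ := exists_pos_setLIntegral_lt_of_measure_lt (μ := μ) hgfin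
    (ε := ENNReal.ofReal (ε / 8)) (by simp [ENNReal.ofReal_eq_zero]; positivity)
  obtain ⟨r, hrpos, hrlt⟩ := ENNReal.lt_iff_exists_nnreal_btwn.mp hδ₂pos
  have hrpos' : (0 : ℝ) < r := by exact_mod_cast hrpos
  refine ⟨ε₁ * Real.sqrt r, by positivity, fun X hX => ?_⟩
  -- the difference Z
  set Z : Lp ℝ 2 μ := X - Y with hZdef
  have hZnorm : ‖Z‖ < ε₁ * Real.sqrt r := by rwa [hZdef, ← dist_eq_norm]
  have hZsq_int : Integrable (fun ω => (Z : Ω → ℝ) ω * (Z : Ω → ℝ) ω) μ := by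
    have := L2.integrable_inner (𝕜 := ℝ) Z Z
    simpa [RCLike.inner_apply, starRingEnd_apply, star_trivial, pow_two] using this
  have hZsq : ∫ ω, (Z : Ω → ℝ) ω * (Z : Ω → ℝ) ω ∂μ = ‖Z‖ ^ 2 := by
    have h1 : ⟪Z, Z⟫ = ∫ ω, (Z : Ω → ℝ) ω * (Z : Ω → ℝ) ω ∂μ := by
      rw [L2.inner_def]
      simp [RCLike.inner_apply, starRingEnd_apply, star_trivial, pow_two]
    rw [← h1, real_inner_self_eq_norm_sq]
  -- the set A
  set A : Set Ω := {ω | ε₁ ≤ |(Z : Ω → ℝ) ω|} with hAdef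
  have hA : MeasurableSet A :=
    measurableSet_le measurable_const (Lp.stronglyMeasurable Z).measurable.abs
  -- Chebyshev
  have hcheb : (μ A).toReal < r := by
    have h1 : ε₁ ^ 2 * (μ A).toReal ≤ ∫ ω in A, (Z : Ω → ℝ) ω * (Z : Ω → ℝ) ω ∂μ := by
      refine setIntegral_ge_of_const_le_real hA (measure_ne_top μ A) (fun ω hω => ?_)
        hZsq_int.integrableOn
      have hω' : ε₁ ≤ |(Z : Ω → ℝ) ω| := hω
      nlinarith [abs_mul_abs_self ((Z : Ω → ℝ) ω), hε₁pos.le]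
    have h2 : ∫ ω in A, (Z : Ω → ℝ) ω * (Z : Ω → ℝ) ω ∂μ
        ≤ ∫ ω, (Z : Ω → ℝ) ω * (Z : Ω → ℝ) ω ∂μ :=
      setIntegral_le_integral hZsq_int (Filter.Eventually.of_forall fun ω => mul_self_nonneg _)
    have h3 : ‖Z‖ ^ 2 < ε₁ ^ 2 * r := by
      have := Real.sq_sqrt hrpos'.le
      nlinarith [norm_nonneg Z, Real.sqrt_nonneg (r : ℝ)]
    have h4 : (0 : ℝ) ≤ (μ A).toReal := ENNReal.toReal_nonneg
    nlinarith
  have hμA : μ A < δ₂ := by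
    calc μ A = ENNReal.ofReal ((μ A).toReal) := by
          rw [ENNReal.ofReal_toReal (measure_ne_top μ A)]
      _ < ENNReal.ofReal r := ENNReal.ofReal_lt_ofReal_iff hrpos' |>.mpr hcheb
      _ ≤ (r : ℝ≥0∞) := by rw [ENNReal.ofReal_coe_nnreal]
      _ < δ₂ := hrlt
  -- small integral over A
  have hAg : ∫ ω in A, ‖g ω‖ ∂μ < ε / 8 := by
    have h1 : ∫⁻ ω in A, (‖g ω‖₊ : ℝ≥0∞) ∂μ < ENNReal.ofReal (ε / 8) := hδ₂ A hμA
    have h2 : ∫ ω in A, ‖g ω‖ ∂μ = (∫⁻ ω in A, (‖g ω‖₊ : ℝ≥0∞) ∂μ).toReal :=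
      integral_norm_eq_lintegral_enorm (hg.1.restrict)
    rw [h2]
    exact ENNReal.toReal_lt_of_lt_ofReal h1
  -- pointwise bound
  have hsub : (Z : Ω → ℝ) =ᵐ[μ] (X : Ω → ℝ) - (Y : Ω → ℝ) := Lp.coeFn_sub X Y
  have hptwise : ∀ᵐ ω ∂μ,
      ‖Complex.exp (Complex.I * ((X : Ω → ℝ) ω : ℂ)) * g ω
        - Complex.exp (Complex.I * ((Y : Ω → ℝ) ω : ℂ)) * g ω‖
      ≤ A.indicator (fun ω => 2 * ‖g ω‖) ω + 2 * ε₁ * ‖g ω‖ := by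
    filter_upwards [hsub] with ω hω
    have key : ‖Complex.exp (Complex.I * ((X : Ω → ℝ) ω : ℂ)) * g ω
        - Complex.exp (Complex.I * ((Y : Ω → ℝ) ω : ℂ)) * g ω‖
        = ‖Complex.exp (Complex.I * ((X : Ω → ℝ) ω : ℂ))
            - Complex.exp (Complex.I * ((Y : Ω → ℝ) ω : ℂ))‖ * ‖g ω‖ := by
      rw [← sub_mul, norm_mul]
    rw [key]
    by_cases hωA : ω ∈ A
    · have hb : ‖Complex.exp (Complex.I * ((X : Ω → ℝ) ω : ℂ))
          - Complex.exp (Complex.I * ((Y : Ω → ℝ) ω : ℂ))‖ ≤ 2 := by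
        calc _ ≤ ‖Complex.exp (Complex.I * ((X : Ω → ℝ) ω : ℂ))‖
              + ‖Complex.exp (Complex.I * ((Y : Ω → ℝ) ω : ℂ))‖ := norm_sub_le _ _
          _ = 2 := by rw [norm_expI, norm_expI]; norm_num
      rw [Set.indicator_of_mem hωA]
      have := mul_le_mul_of_nonneg_right hb (norm_nonneg (g ω))
      nlinarith [norm_nonneg (g ω), hε₁pos.le]
    · have hωA' : |(Z : Ω → ℝ) ω| < ε₁ := by
        by_contra hcon
        exact hωA (le_of_not_gt hcon)
      have hb : ‖Complex.exp (Complex.I * ((X : Ω → ℝ) ω : ℂ))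
          - Complex.exp (Complex.I * ((Y : Ω → ℝ) ω : ℂ))‖
          ≤ 2 * |(X : Ω → ℝ) ω - (Y : Ω → ℝ) ω| := norm_expI_sub_expI_le _ _
      have hZω : (Z : Ω → ℝ) ω = (X : Ω → ℝ) ω - (Y : Ω → ℝ) ω := hω
      rw [Set.indicator_of_notMem hωA, zero_add]
      rw [← hZω] at hb
      have := mul_le_mul_of_nonneg_right hb (norm_nonneg (g ω))
      nlinarith [norm_nonneg (g ω), abs_nonneg ((Z : Ω → ℝ) ω)]
  -- integrability of the bound
  have hbound_int : Integrable
      (fun ω => A.indicator (fun ω => 2 * ‖g ω‖) ω + 2 * ε₁ * ‖g ω‖) μ :=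
    ((hg.norm.const_mul 2).indicator hA).add (hg.norm.const_mul (2 * ε₁))
  -- final estimate
  have hfinal : dist (∫ ω, Complex.exp (Complex.I * ((X : Ω → ℝ) ω : ℂ)) * g ω ∂μ)
      (∫ ω, Complex.exp (Complex.I * ((Y : Ω → ℝ) ω : ℂ)) * g ω ∂μ)
      ≤ ∫ ω, (A.indicator (fun ω => 2 * ‖g ω‖) ω + 2 * ε₁ * ‖g ω‖) ∂μ := by
    rw [dist_eq_norm, ← integral_sub (hInt X) (hInt Y)]
    exact norm_integral_le_of_norm_le hbound_int hptwise
  have hsplit : ∫ ω, (A.indicator (fun ω => 2 * ‖g ω‖) ω + 2 * ε₁ * ‖g ω‖) ∂μ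
      = 2 * ∫ ω in A, ‖g ω‖ ∂μ + 2 * ε₁ * I₁ := by
    rw [integral_add ((hg.norm.const_mul 2).indicator hA) (hg.norm.const_mul (2 * ε₁))]
    rw [integral_indicator hA, integral_const_mul, integral_const_mul]
  rw [hsplit] at hfinal
  have hAg' : 2 * ∫ ω in A, ‖g ω‖ ∂μ + 2 * ε₁ * I₁ < ε := by
    have h2 : 2 * ε₁ * I₁ ≤ ε / 2 := by
      have hle : I₁ / (2 * (I₁ + 1)) ≤ 1 / 2 := by
        rw [div_le_iff₀ (by positivity)]; nlinarith
      have hne : (I₁ + 1) ≠ 0 := by positivity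
      calc 2 * ε₁ * I₁ = ε * (I₁ / (2 * (I₁ + 1))) := by
            rw [hε₁def]; field_simp; ring
        _ ≤ ε * (1 / 2) := by nlinarith
        _ = ε / 2 := by ring
    linarith
  linarith

/-- Let `W` be an `H`-isonormal process on a probability space `(Ω, μ)`,
`G` a topological group and `π : G → B(H)` a strongly continuous orthogonal representation
(each `π s` is a surjective linear isometry, `π (s t) = π s ∘ π t`, `π 1 = id`, and
`s ↦ π s h` is continuous for each `h`).  Then for every `h ∈ H` and every `g ∈ L¹(Ω; ℂ)`
the map `s ↦ ∫_Ω e^{i W(π s h)} g dμ` is continuous on `G`. -/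
theorem statement7
    {Ω : Type*} [MeasurableSpace Ω] {μ : Measure Ω} [IsProbabilityMeasure μ]
    {H : Type*} [NormedAddCommGroup H] [InnerProductSpace ℝ H]
    (W : H →ₗ[ℝ] Lp ℝ 2 μ)
    (hLaw : ∀ h, Measure.map (W h : Ω → ℝ) μ = gaussianReal 0 (‖h‖₊ ^ 2))
    (hCov : ∀ h₁ h₂, ∫ ω, (W h₁ : Ω → ℝ) ω * (W h₂ : Ω → ℝ) ω ∂μ = ⟪h₁, h₂⟫)
    {G : Type*} [Group G] [TopologicalSpace G] [IsTopologicalGroup G]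
    (π : G → (H ≃ₗᵢ[ℝ] H))
    (hπ_mul : ∀ s t : G, ∀ h : H, π (s * t) h = π s (π t h))
    (hπ_one : ∀ h : H, π 1 h = h)
    (hπ_cont : ∀ h : H, Continuous fun s : G => π s h)
    (h : H) (g : Ω → ℂ) (hg : Integrable g μ) :
    Continuous fun s : G =>
      ∫ ω, Complex.exp (Complex.I * ((W (π s h) : Ω → ℝ) ω : ℂ)) * g ω ∂μ := by
  have hWnorm : ∀ c : H, ‖W c‖ = ‖c‖ := by
    intro c
    have h1 : ⟪W c, W c⟫ = ∫ ω, (W c : Ω → ℝ) ω * (W c : Ω → ℝ) ω ∂μ := by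
      rw [L2.inner_def]
      simp [RCLike.inner_apply, starRingEnd_apply, star_trivial, pow_two]
    have h2 : ‖W c‖ ^ 2 = ‖c‖ ^ 2 := by
      rw [← real_inner_self_eq_norm_sq, h1, hCov c c, real_inner_self_eq_norm_sq]
    nlinarith [norm_nonneg (W c), norm_nonneg c]
  have hWcont : Continuous (W : H → Lp ℝ 2 μ) :=
    AddMonoidHomClass.continuous_of_bound W 1 fun x => by rw [one_mul, hWnorm]
  exact (expInt_continuous g hg).comp (hWcont.comp (hπ_cont h))
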